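/- Let f_A, f_B : ℝⁿ → [0,1] be measurable with Weierstrass transforms f̂_A, f̂_B taking values in (0,1). Fix x ∈ ℝⁿ and let p_A = f̂_A(x), p_B = f̂_B(x) with p_B ≤ p_A. Then for any perturbation δ ∈ ℝⁿ such that f̂_A(x + δ) ≤ f̂_B(x + δ), one has ‖δ‖₂ ≥ (1/2)(Φ⁻¹(p_A) - Φ⁻¹(p_B)). -/

import Mathlib

open MeasureTheory Real

/-- The standard `n`-dimensional Gaussian measure `N(0, Iₙ)`, with density
`(2π)^{-n/2} exp(-‖t‖²/2)` with respect to Lebesgue measure. -/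
noncomputable def stdGaussian (n : ℕ) : Measure (EuclideanSpace ℝ (Fin n)) :=
  volume.withDensity fun t =>
    ENNReal.ofReal ((2 * π) ^ (-(n : ℝ) / 2) * Real.exp (-‖t‖ ^ 2 / 2))

/-- The standard Gaussian CDF `Φ(a) = (1/√(2π)) ∫_{-∞}^a exp(-s²/2) ds`. -/
noncomputable def stdGaussianCDF (a : ℝ) : ℝ :=
  (Real.sqrt (2 * π))⁻¹ * ∫ s in Set.Iic a, Real.exp (-s ^ 2 / 2)

/-- The inverse `Φ⁻¹ : (0,1) → ℝ` of the standard Gaussian CDF. -/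
noncomputable def stdGaussianCDFInv : ℝ → ℝ :=
  Function.invFun stdGaussianCDF

lemma phi_eq (s : ℝ) : Real.exp (-s ^ 2 / 2) = Real.exp (-(1/2) * s ^ 2) := by ring_nf

lemma integrable_phi : Integrable (fun s : ℝ => Real.exp (-s ^ 2 / 2)) := by
  simp_rw [phi_eq]; exact integrable_exp_neg_mul_sq (by norm_num)

lemma integral_phi : ∫ s : ℝ, Real.exp (-s ^ 2 / 2) = Real.sqrt (2 * π) := by
  simp_rw [phi_eq]
  rw [integral_gaussian]
  rw [show π / (1/2 : ℝ) = 2 * π by ring]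

lemma sqrt_two_pi_pos : (0:ℝ) < Real.sqrt (2 * π) :=
  Real.sqrt_pos.2 (by positivity)

lemma stdGaussianCDF_strictMono : StrictMono stdGaussianCDF := by
  intro a b hab
  unfold stdGaussianCDF
  have h1 : ((∫ s in Set.Iic b, Real.exp (-s ^ 2 / 2)) - ∫ s in Set.Iic a, Real.exp (-s ^ 2 / 2))
      = ∫ s in a..b, Real.exp (-s ^ 2 / 2) :=
    intervalIntegral.integral_Iic_sub_Iic integrable_phi.integrableOn integrable_phi.integrableOn
  have h2 : 0 < ∫ s in a..b, Real.exp (-s ^ 2 / 2) :=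
    intervalIntegral.intervalIntegral_pos_of_pos
      (integrable_phi.intervalIntegrable) (fun s => Real.exp_pos _) hab
  have := sqrt_two_pi_pos
  nlinarith [inv_pos.2 this]

lemma stdGaussianCDF_continuous : Continuous stdGaussianCDF := by
  have h0 : ∀ c : ℝ, stdGaussianCDF c = (Real.sqrt (2 * π))⁻¹ *
      ((∫ s in Set.Iic (0:ℝ), Real.exp (-s ^ 2 / 2)) + ∫ s in (0:ℝ)..c, Real.exp (-s ^ 2 / 2)) := by
    intro c
    rw [stdGaussianCDF, ← intervalIntegral.integral_Iic_sub_Iic integrable_phi.integrableOn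
      integrable_phi.integrableOn]
    rw [add_sub_cancel]
  rw [show stdGaussianCDF = fun c => (Real.sqrt (2 * π))⁻¹ *
      ((∫ s in Set.Iic (0:ℝ), Real.exp (-s ^ 2 / 2)) + ∫ s in (0:ℝ)..c, Real.exp (-s ^ 2 / 2))
    from funext h0]
  exact continuous_const.mul (continuous_const.add (integrable_phi.continuous_primitive 0))

noncomputable def gauss1Measure : Measure ℝ :=
  volume.withDensity fun s => ENNReal.ofReal (Real.exp (-s ^ 2 / 2))

lemma gauss1Measure_Iic (c : ℝ) :
    gauss1Measure (Set.Iic c) = ENNReal.ofReal (∫ s in Set.Iic c, Real.exp (-s ^ 2 / 2)) := by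
  rw [gauss1Measure, withDensity_apply _ measurableSet_Iic,
    ← MeasureTheory.ofReal_integral_eq_lintegral_ofReal integrable_phi.integrableOn
      (Filter.Eventually.of_forall fun s => (Real.exp_pos _).le)]

lemma gauss1Measure_univ : gauss1Measure Set.univ = ENNReal.ofReal (Real.sqrt (2 * π)) := by
  rw [gauss1Measure, withDensity_apply _ MeasurableSet.univ, Measure.restrict_univ,
    ← MeasureTheory.ofReal_integral_eq_lintegral_ofReal integrable_phi
      (Filter.Eventually.of_forall fun s => (Real.exp_pos _).le), integral_phi]

lemma stdGaussianCDF_tendsto_atTop :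
    Filter.Tendsto stdGaussianCDF Filter.atTop (nhds 1) := by
  have h1 : Filter.Tendsto (fun c : ℝ => gauss1Measure (Set.Iic c)) Filter.atTop
      (nhds (gauss1Measure Set.univ)) := tendsto_measure_Iic_atTop _
  have h2 : Filter.Tendsto (fun c : ℝ => (gauss1Measure (Set.Iic c)).toReal) Filter.atTop
      (nhds ((gauss1Measure Set.univ).toReal)) :=
    (ENNReal.tendsto_toReal (by rw [gauss1Measure_univ]; exact ENNReal.ofReal_ne_top)).comp h1
  have h3 : ∀ c : ℝ, stdGaussianCDF c = (Real.sqrt (2 * π))⁻¹ *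
      (gauss1Measure (Set.Iic c)).toReal := by
    intro c
    rw [gauss1Measure_Iic, ENNReal.toReal_ofReal (integral_nonneg fun s => (Real.exp_pos _).le)]
    rfl
  rw [show stdGaussianCDF = fun c => (Real.sqrt (2 * π))⁻¹ * (gauss1Measure (Set.Iic c)).toReal
    from funext h3]
  have : ((Real.sqrt (2 * π))⁻¹ * (gauss1Measure Set.univ).toReal) = 1 := by
    rw [gauss1Measure_univ, ENNReal.toReal_ofReal sqrt_two_pi_pos.le]
    exact inv_mul_cancel₀ sqrt_two_pi_pos.ne'
  rw [← this]
  exact h2.const_mul _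

lemma stdGaussianCDF_tendsto_atBot :
    Filter.Tendsto stdGaussianCDF Filter.atBot (nhds 0) := by
  have hempty : (⋂ c : ℝ, Set.Iic c) = ∅ := by
    ext y; simp only [Set.mem_iInter, Set.mem_Iic, Set.mem_empty_iff_false, iff_false, not_forall,
      not_le]
    exact ⟨y - 1, by linarith⟩
  have h1 : Filter.Tendsto (fun c : ℝ => gauss1Measure (Set.Iic c)) Filter.atBot
      (nhds 0) := by
    have := MeasureTheory.tendsto_measure_iInter_atBot (μ := gauss1Measure)
      (s := fun c : ℝ => Set.Iic c) (fun c => measurableSet_Iic.nullMeasurableSet)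
      (fun a b hab => Set.Iic_subset_Iic.2 hab)
      ⟨0, by rw [gauss1Measure_Iic]; exact ENNReal.ofReal_ne_top⟩
    rwa [hempty, measure_empty] at this
  have h2 : Filter.Tendsto (fun c : ℝ => (gauss1Measure (Set.Iic c)).toReal) Filter.atBot
      (nhds 0) := by
    have := (ENNReal.tendsto_toReal (by simp : (0:ENNReal) ≠ ⊤)).comp h1
    simpa [Function.comp_def] using this
  have h3 : ∀ c : ℝ, stdGaussianCDF c = (Real.sqrt (2 * π))⁻¹ *
      (gauss1Measure (Set.Iic c)).toReal := by
    intro c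
    rw [gauss1Measure_Iic, ENNReal.toReal_ofReal (integral_nonneg fun s => (Real.exp_pos _).le)]
    rfl
  rw [show stdGaussianCDF = fun c => (Real.sqrt (2 * π))⁻¹ * (gauss1Measure (Set.Iic c)).toReal
    from funext h3]
  simpa using h2.const_mul ((Real.sqrt (2 * π))⁻¹)

lemma stdGaussianCDF_surj {p : ℝ} (hp : p ∈ Set.Ioo (0:ℝ) 1) :
    ∃ c, stdGaussianCDF c = p := by
  obtain ⟨a, ha⟩ : ∃ a, stdGaussianCDF a < p := by
    have := stdGaussianCDF_tendsto_atBot.eventually_lt_const hp.1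
    exact this.exists
  obtain ⟨b, hb⟩ : ∃ b, p < stdGaussianCDF b := by
    have := stdGaussianCDF_tendsto_atTop.eventually_const_lt hp.2
    exact this.exists
  have hab : a ≤ b := by
    by_contra h
    exact absurd (stdGaussianCDF_strictMono.monotone (le_of_not_ge h)) (by linarith)
  have := intermediate_value_Icc hab stdGaussianCDF_continuous.continuousOn
  obtain ⟨c, _, hc⟩ := this ⟨ha.le, hb.le⟩
  exact ⟨c, hc⟩

lemma stdGaussianCDF_invFun {p : ℝ} (hp : p ∈ Set.Ioo (0:ℝ) 1) :
    stdGaussianCDF (stdGaussianCDFInv p) = p :=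
  Function.invFun_eq (stdGaussianCDF_surj hp)

lemma stdGaussianCDF_neg (a : ℝ) : stdGaussianCDF (-a) = 1 - stdGaussianCDF a := by
  have key : ((∫ s in Set.Iic a, Real.exp (-s ^ 2 / 2)) +
      ∫ s in Set.Iic (-a), Real.exp (-s ^ 2 / 2)) = Real.sqrt (2 * π) := by
    have h1 : (∫ s in Set.Iic (-a), Real.exp (-s ^ 2 / 2))
        = ∫ s in Set.Ioi a, Real.exp (-s ^ 2 / 2) := by
      have := integral_comp_neg_Iic (-a) (fun x : ℝ => Real.exp (-x ^ 2 / 2))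
      simp only [neg_neg] at this
      rw [← this]
      simp [neg_sq]
    rw [h1,
      intervalIntegral.integral_Iic_add_Ioi integrable_phi.integrableOn integrable_phi.integrableOn,
      integral_phi]
  have h := sqrt_two_pi_pos
  have expand : stdGaussianCDF (-a) + stdGaussianCDF a = 1 := by
    unfold stdGaussianCDF
    rw [← mul_add, add_comm (∫ s in Set.Iic (-a), Real.exp (-s ^ 2 / 2)), key]
    exact inv_mul_cancel₀ h.ne'
  linarith

noncomputable def gaussDensity (n : ℕ) (t : EuclideanSpace ℝ (Fin n)) : ℝ :=
  (2 * π) ^ (-(n : ℝ) / 2) * Real.exp (-‖t‖ ^ 2 / 2)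

lemma gaussDensity_pos {n : ℕ} (t : EuclideanSpace ℝ (Fin n)) : 0 < gaussDensity n t := by
  unfold gaussDensity
  positivity

lemma continuous_gaussDensity (n : ℕ) : Continuous (gaussDensity n) := by
  unfold gaussDensity
  fun_prop

lemma const_cancel (n : ℕ) : ((Real.sqrt (2 * π))⁻¹) ^ n = (2 * π) ^ (-(n : ℝ) / 2) := by
  have h2π : (0:ℝ) < 2 * π := by positivity
  rw [Real.sqrt_eq_rpow, ← Real.rpow_neg_one ((2*π) ^ ((1:ℝ)/2)), ← Real.rpow_natCast
    (((2*π) ^ ((1:ℝ)/2)) ^ (-1:ℝ)) n, ← Real.rpow_mul h2π.le, ← Real.rpow_mul h2π.le]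
  ring_nf

lemma norm_sq_eq_sum_repr {n : ℕ} (b : OrthonormalBasis (Fin n) ℝ (EuclideanSpace ℝ (Fin n)))
    (s : EuclideanSpace ℝ (Fin n)) : ‖s‖ ^ 2 = ∑ i, (b.repr s i) ^ 2 := by
  rw [← b.repr.norm_map s, EuclideanSpace.norm_eq, Real.sq_sqrt]
  · simp [sq_abs]
  · positivity


lemma pi_halfspace {n : ℕ} (j₀ : Fin n) (c : ℝ) :
    ∫ y : Fin n → ℝ, Set.indicator {y : Fin n → ℝ | y j₀ ≤ c}
      (fun y => (2 * π) ^ (-(n:ℝ)/2) * Real.exp (-(∑ i, (y i)^2)/2)) y = stdGaussianCDF c := by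
  classical
  have hprod : ∀ y : Fin n → ℝ, Set.indicator {y : Fin n → ℝ | y j₀ ≤ c}
      (fun y => (2 * π) ^ (-(n:ℝ)/2) * Real.exp (-(∑ i, (y i)^2)/2)) y
      = ∏ i, Function.update (fun (_ : Fin n) (t : ℝ) => (Real.sqrt (2 * π))⁻¹ *
          Real.exp (-t^2/2)) j₀
          (Set.indicator (Set.Iic c) (fun t => (Real.sqrt (2 * π))⁻¹ * Real.exp (-t^2/2)))
          i (y i) := by
    intro y
    have hexpand : ∏ i, (Real.sqrt (2 * π))⁻¹ * Real.exp (-(y i)^2/2)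
        = (2 * π) ^ (-(n:ℝ)/2) * Real.exp (-(∑ i, (y i)^2)/2) := by
      rw [Finset.prod_mul_distrib, Finset.prod_const, Finset.card_univ, Fintype.card_fin,
        const_cancel n, ← Real.exp_sum]
      congr 1
      rw [← Finset.sum_div, ← Finset.sum_neg_distrib]
    by_cases hy : y j₀ ≤ c
    · rw [Set.indicator_of_mem (show y ∈ {y : Fin n → ℝ | y j₀ ≤ c} from hy)]
      rw [← hexpand]
      apply Finset.prod_congr rfl
      intro i _
      by_cases hi : i = j₀
      · rw [hi, Function.update_self]
        exact (Set.indicator_of_mem (show y j₀ ∈ Set.Iic c from hy)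
          (fun t => (Real.sqrt (2 * π))⁻¹ * Real.exp (-t^2/2))).symm
      · rw [Function.update_of_ne hi]
    · rw [Set.indicator_of_notMem (show y ∉ {y : Fin n → ℝ | y j₀ ≤ c} from hy)]
      symm
      apply Finset.prod_eq_zero (Finset.mem_univ j₀)
      rw [Function.update_self]
      exact Set.indicator_of_notMem (show y j₀ ∉ Set.Iic c from hy) _
  simp_rw [hprod]
  rw [MeasureTheory.integral_fintype_prod_volume_eq_prod]
  have hmain : (∫ t : ℝ, Function.update (fun (_ : Fin n) (t : ℝ) => (Real.sqrt (2 * π))⁻¹ *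
      Real.exp (-t^2/2)) j₀
      (Set.indicator (Set.Iic c) (fun t => (Real.sqrt (2 * π))⁻¹ * Real.exp (-t^2/2))) j₀ t)
      = stdGaussianCDF c := by
    rw [Function.update_self, MeasureTheory.integral_indicator measurableSet_Iic,
      MeasureTheory.integral_const_mul, stdGaussianCDF]
  have hother : ∀ i, i ≠ j₀ → (∫ t : ℝ, Function.update (fun (_ : Fin n) (t : ℝ) =>
      (Real.sqrt (2 * π))⁻¹ * Real.exp (-t^2/2)) j₀
      (Set.indicator (Set.Iic c) (fun t => (Real.sqrt (2 * π))⁻¹ * Real.exp (-t^2/2))) i t)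
      = 1 := by
    intro i hi
    rw [Function.update_of_ne hi, MeasureTheory.integral_const_mul, integral_phi]
    exact inv_mul_cancel₀ sqrt_two_pi_pos.ne'
  rw [Finset.prod_eq_single j₀ (fun i _ hi => hother i hi) (by simp), hmain]

open RealInnerProductSpace in
lemma halfspace_integral {n : ℕ} (u : EuclideanSpace ℝ (Fin n)) (hu : ‖u‖ = 1) (c : ℝ) :
    ∫ s in {s : EuclideanSpace ℝ (Fin n) | ⟪s, u⟫ ≤ c}, gaussDensity n s
      = stdGaussianCDF c := by
  classical
  have hn : n ≠ 0 := by
    rintro rfl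
    rw [Subsingleton.elim u 0] at hu
    simp at hu
  haveI : NeZero n := ⟨hn⟩
  set j₀ : Fin n := ⟨0, Nat.pos_of_ne_zero hn⟩ with hj₀
  have hcard : Module.finrank ℝ (EuclideanSpace ℝ (Fin n)) = Fintype.card (Fin n) := by simp
  have horth : Orthonormal ℝ (Set.restrict {j₀} (fun _ : Fin n => u)) := by
    constructor
    · intro i; exact hu
    · intro i j hij
      exact absurd (Subsingleton.elim i j) hij
  obtain ⟨b, hb⟩ := horth.exists_orthonormalBasis_extension_of_card_eq hcard
  have hbj : b j₀ = u := hb j₀ rfl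
  set e := (MeasurableEquiv.toLp 2 (Fin n → ℝ)).symm with he
  set Ψ : EuclideanSpace ℝ (Fin n) → (Fin n → ℝ) := fun s => e (b.measurableEquiv s) with hΨ
  have hΨapp : ∀ (s : EuclideanSpace ℝ (Fin n)) i, Ψ s i = b.repr s i := by
    intro s i
    rw [hΨ]
    simp only [he, MeasurableEquiv.coe_toLp_symm]
    rfl
  have hMP : MeasurePreserving Ψ volume volume :=
    (EuclideanSpace.volume_preserving_symm_measurableEquiv_toLp (Fin n)).comp
      b.measurePreserving_measurableEquiv
  have hEmb : MeasurableEmbedding Ψ :=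
    (MeasurableEquiv.measurableEmbedding e).comp (b.measurableEquiv.measurableEmbedding)
  set g : (Fin n → ℝ) → ℝ := fun y => (2 * π) ^ (-(n : ℝ) / 2) * Real.exp (-(∑ i, (y i)^2) / 2)
    with hg
  have hρ : ∀ s, gaussDensity n s = g (Ψ s) := by
    intro s
    rw [hg, gaussDensity, norm_sq_eq_sum_repr b s]
    simp only [hΨapp]
  have hset : {s : EuclideanSpace ℝ (Fin n) | ⟪s, u⟫ ≤ c} = Ψ ⁻¹' {y | y j₀ ≤ c} := by
    ext s
    simp only [Set.mem_setOf_eq, Set.mem_preimage, hΨapp, OrthonormalBasis.repr_apply_apply, hbj]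
    rw [real_inner_comm]
  rw [hset]
  calc ∫ s in Ψ ⁻¹' {y | y j₀ ≤ c}, gaussDensity n s
      = ∫ s in Ψ ⁻¹' {y | y j₀ ≤ c}, g (Ψ s) := by
        have hTset : MeasurableSet {y : Fin n → ℝ | y j₀ ≤ c} :=
          measurableSet_le (measurable_pi_apply j₀) measurable_const
        exact MeasureTheory.setIntegral_congr_fun (hMP.measurable hTset) (fun s _ => hρ s)
    _ = ∫ y in {y | y j₀ ≤ c}, g y :=
        hMP.setIntegral_preimage_emb hEmb g _
    _ = stdGaussianCDF c := by
        have hT : MeasurableSet {y : Fin n → ℝ | y j₀ ≤ c} :=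
          measurableSet_le (measurable_pi_apply j₀) measurable_const
        rw [← MeasureTheory.integral_indicator hT, hg]
        exact pi_halfspace j₀ c

lemma norm_symm_sq {n : ℕ} (y : Fin n → ℝ) :
    ‖((MeasurableEquiv.toLp 2 (Fin n → ℝ)).symm).symm y‖^2 = ∑ i, (y i)^2 := by
  rw [EuclideanSpace.norm_eq, Real.sq_sqrt (by positivity)]
  congr 1
  funext i
  rw [MeasurableEquiv.symm_symm, MeasurableEquiv.toLp_apply, Real.norm_eq_abs,
    sq_abs]

lemma integrable_exp_neg_norm_sq (n : ℕ) :
    Integrable (fun t : EuclideanSpace ℝ (Fin n) => Real.exp (-‖t‖^2/2)) := by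
  have h := EuclideanSpace.volume_preserving_symm_measurableEquiv_toLp (Fin n)
  rw [← MeasurePreserving.integrable_comp_emb h.symm (MeasurableEquiv.measurableEmbedding _)]
  have heq : (fun t : EuclideanSpace ℝ (Fin n) => Real.exp (-‖t‖^2/2))
      ∘ ((MeasurableEquiv.toLp 2 (Fin n → ℝ)).symm).symm
      = fun y : Fin n → ℝ => ∏ i, Real.exp (-(y i)^2/2) := by
    funext y
    simp only [Function.comp_apply]
    rw [norm_symm_sq, ← Real.exp_sum]
    congr 1
    rw [← Finset.sum_div, ← Finset.sum_neg_distrib]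
  rw [heq]
  exact Integrable.fintype_prod (f := fun (_ : Fin n) (v : ℝ) => Real.exp (-v^2/2))
    (fun i => integrable_phi)

lemma integrable_gaussDensity (n : ℕ) : Integrable (gaussDensity n) :=
  (integrable_exp_neg_norm_sq n).const_mul _

lemma integral_exp_neg_norm_sq (n : ℕ) :
    ∫ t : EuclideanSpace ℝ (Fin n), Real.exp (-‖t‖^2/2) = Real.sqrt (2 * π) ^ n := by
  have h := (EuclideanSpace.volume_preserving_symm_measurableEquiv_toLp (Fin n)).symm
  rw [← h.integral_comp (MeasurableEquiv.measurableEmbedding _)]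
  have heq : ∀ y : Fin n → ℝ, Real.exp (-‖((MeasurableEquiv.toLp 2 (Fin n → ℝ)).symm).symm y‖^2/2)
      = ∏ i, Real.exp (-(y i)^2/2) := by
    intro y
    rw [norm_symm_sq, ← Real.exp_sum]
    congr 1
    rw [← Finset.sum_div, ← Finset.sum_neg_distrib]
  simp_rw [heq]
  rw [MeasureTheory.integral_fintype_prod_volume_eq_prod
    (fun (_ : Fin n) (v : ℝ) => Real.exp (-v^2/2))]
  simp [integral_phi]

lemma integral_gaussDensity (n : ℕ) : ∫ t, gaussDensity n t = 1 := by
  unfold gaussDensity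
  rw [MeasureTheory.integral_const_mul, integral_exp_neg_norm_sq, ← const_cancel n, inv_pow,
    inv_mul_cancel₀ (pow_ne_zero n sqrt_two_pi_pos.ne')]

lemma stdGaussian_integral {n : ℕ} (g : EuclideanSpace ℝ (Fin n) → ℝ) :
    ∫ t, g t ∂(stdGaussian n) = ∫ t, gaussDensity n t * g t := by
  have hmeas : Measurable fun t : EuclideanSpace ℝ (Fin n) => (gaussDensity n t).toNNReal :=
    (continuous_gaussDensity n).measurable.real_toNNReal
  have hsg : stdGaussian n = volume.withDensity
      (fun t => ((gaussDensity n t).toNNReal : ENNReal)) := by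
    rfl
  rw [hsg, integral_withDensity_eq_integral_smul hmeas g]
  congr 1
  funext t
  rw [NNReal.smul_def, Real.coe_toNNReal _ (gaussDensity_pos t).le, smul_eq_mul]

open RealInnerProductSpace in
lemma np_lower {n : ℕ} (f : EuclideanSpace ℝ (Fin n) → ℝ) (hf : Measurable f)
    (h0 : ∀ t, 0 ≤ f t) (h1 : ∀ t, f t ≤ 1) (δ : EuclideanSpace ℝ (Fin n)) (a : ℝ)
    (ha : (∫ t, f t ∂(stdGaussian n)) = stdGaussianCDF a) :
    stdGaussianCDF (a - ‖δ‖) ≤ ∫ t, f (δ + t) ∂(stdGaussian n) := by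
  rcases eq_or_ne δ 0 with rfl | hδ
  · simp only [norm_zero, sub_zero, zero_add]
    rw [← ha]
  · have hδn : ‖δ‖ ≠ 0 := norm_ne_zero_iff.2 hδ
    have hδpos : 0 < ‖δ‖ := norm_pos_iff.2 hδ
    set u : EuclideanSpace ℝ (Fin n) := ‖δ‖⁻¹ • δ with hudef
    have hu : ‖u‖ = 1 := by
      rw [hudef, norm_smul, norm_inv, norm_norm, inv_mul_cancel₀ hδn]
    have hδu : δ = ‖δ‖ • u := by
      rw [hudef, smul_inv_smul₀ hδn]
    have hδuinner : ⟪δ, u⟫ = ‖δ‖ := by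
      nth_rewrite 1 [hδu]
      rw [real_inner_smul_left, real_inner_self_eq_norm_sq, hu]
      ring
    have hinner : ∀ s : EuclideanSpace ℝ (Fin n), ⟪s, δ⟫ = ‖δ‖ * ⟪s, u⟫ := by
      intro s
      nth_rewrite 1 [hδu]
      rw [real_inner_smul_right]
    have hρshift : ∀ s : EuclideanSpace ℝ (Fin n), gaussDensity n (s - δ)
        = gaussDensity n s * Real.exp (‖δ‖ * ⟪s, u⟫ - ‖δ‖^2/2) := by
      intro s
      unfold gaussDensity
      rw [@norm_sub_sq_real _ _ _ s δ, hinner s]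
      have harg : -(‖s‖^2 - 2*(‖δ‖*⟪s,u⟫) + ‖δ‖^2)/2
          = -‖s‖^2/2 + (‖δ‖*⟪s,u⟫ - ‖δ‖^2/2) := by ring
      rw [harg, Real.exp_add, mul_assoc]
    have hSmeas : MeasurableSet {s : EuclideanSpace ℝ (Fin n) | ⟪s, u⟫ ≤ a} :=
      measurableSet_le ((continuous_id.inner continuous_const).measurable) measurable_const
    -- integrability facts
    have intρ := integrable_gaussDensity n
    have intρδ : Integrable (fun s : EuclideanSpace ℝ (Fin n) => gaussDensity n (s - δ)) :=
      intρ.comp_sub_right δ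
    have habs : ∀ (ρv fv : ℝ), 0 < ρv → 0 ≤ fv → fv ≤ 1 → ‖ρv * fv‖ ≤ ρv := by
      intro ρv fv hρ hf0 hf1
      rw [Real.norm_eq_abs, abs_of_nonneg (mul_nonneg hρ.le hf0)]
      exact mul_le_of_le_one_right hρ.le hf1
    have int1 : Integrable (fun s => gaussDensity n (s - δ) * f s) := by
      apply intρδ.mono'
      · exact ((continuous_gaussDensity n).measurable.comp
          (measurable_id.sub measurable_const)).mul hf |>.aestronglyMeasurable
      · exact Filter.Eventually.of_forall fun s =>
          habs _ _ (gaussDensity_pos _) (h0 s) (h1 s)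
    have int3 : Integrable (fun s => gaussDensity n s * f s) := by
      apply intρ.mono'
      · exact ((continuous_gaussDensity n).measurable.mul hf).aestronglyMeasurable
      · exact Filter.Eventually.of_forall fun s =>
          habs _ _ (gaussDensity_pos _) (h0 s) (h1 s)
    have int2 : Integrable (Set.indicator {s : EuclideanSpace ℝ (Fin n) | ⟪s, u⟫ ≤ a}
        (fun s => gaussDensity n (s - δ))) := intρδ.indicator hSmeas
    have int4 : Integrable (Set.indicator {s : EuclideanSpace ℝ (Fin n) | ⟪s, u⟫ ≤ a}
        (gaussDensity n)) := intρ.indicator hSmeas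
    -- identity I1
    have I1 : ∫ t, f (δ + t) ∂(stdGaussian n) = ∫ s, gaussDensity n (s - δ) * f s := by
      rw [stdGaussian_integral]
      calc ∫ t, gaussDensity n t * f (δ + t)
          = ∫ t, (fun s => gaussDensity n (s - δ) * f s) (t + δ) := by
            congr 1
            funext t
            show gaussDensity n t * f (δ + t) = gaussDensity n (t + δ - δ) * f (t + δ)
            rw [add_sub_cancel_right, add_comm δ t]
        _ = ∫ s, gaussDensity n (s - δ) * f s :=
            integral_add_right_eq_self (μ := volume) (fun s => gaussDensity n (s - δ) * f s) δ
    -- identity I3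
    have I3 : ∫ s, gaussDensity n s * f s = stdGaussianCDF a := by
      rw [← stdGaussian_integral, ha]
    have I3' : ∫ s, Set.indicator {s : EuclideanSpace ℝ (Fin n) | ⟪s, u⟫ ≤ a}
        (gaussDensity n) s = stdGaussianCDF a := by
      rw [MeasureTheory.integral_indicator hSmeas]
      exact halfspace_integral u hu a
    -- identity I2
    have I2 : ∫ s, Set.indicator {s : EuclideanSpace ℝ (Fin n) | ⟪s, u⟫ ≤ a}
        (fun s => gaussDensity n (s - δ)) s = stdGaussianCDF (a - ‖δ‖) := by
      have hpt : ∀ t : EuclideanSpace ℝ (Fin n),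
          (Set.indicator {s : EuclideanSpace ℝ (Fin n) | ⟪s, u⟫ ≤ a}
            (fun s => gaussDensity n (s - δ))) (t + δ)
          = Set.indicator {s : EuclideanSpace ℝ (Fin n) | ⟪s, u⟫ ≤ a - ‖δ‖}
            (gaussDensity n) t := by
        intro t
        have hmem : (t + δ ∈ {s : EuclideanSpace ℝ (Fin n) | ⟪s, u⟫ ≤ a})
            ↔ (t ∈ {s : EuclideanSpace ℝ (Fin n) | ⟪s, u⟫ ≤ a - ‖δ‖}) := by
          simp only [Set.mem_setOf_eq, inner_add_left, hδuinner]
          constructor <;> intro h <;> linarith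
        by_cases ht : t ∈ {s : EuclideanSpace ℝ (Fin n) | ⟪s, u⟫ ≤ a - ‖δ‖}
        · rw [Set.indicator_of_mem (hmem.2 ht), Set.indicator_of_mem ht, add_sub_cancel_right]
        · rw [Set.indicator_of_notMem (fun hc => ht (hmem.1 hc)), Set.indicator_of_notMem ht]
      calc ∫ s, Set.indicator {s : EuclideanSpace ℝ (Fin n) | ⟪s, u⟫ ≤ a}
            (fun s => gaussDensity n (s - δ)) s
          = ∫ t, (Set.indicator {s : EuclideanSpace ℝ (Fin n) | ⟪s, u⟫ ≤ a}
              (fun s => gaussDensity n (s - δ))) (t + δ) :=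
            (integral_add_right_eq_self (μ := volume)
              (Set.indicator {s : EuclideanSpace ℝ (Fin n) | ⟪s, u⟫ ≤ a}
                (fun s => gaussDensity n (s - δ))) δ).symm
        _ = ∫ t, Set.indicator {s : EuclideanSpace ℝ (Fin n) | ⟪s, u⟫ ≤ a - ‖δ‖}
              (gaussDensity n) t := by
            congr 1
            funext t
            exact hpt t
        _ = stdGaussianCDF (a - ‖δ‖) := by
            have hS'meas : MeasurableSet {s : EuclideanSpace ℝ (Fin n) | ⟪s, u⟫ ≤ a - ‖δ‖} :=
              measurableSet_le ((continuous_id.inner continuous_const).measurable)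
                measurable_const
            rw [MeasureTheory.integral_indicator hS'meas]
            exact halfspace_integral u hu (a - ‖δ‖)
    -- pointwise inequality
    set L₀ : ℝ := Real.exp (‖δ‖ * a - ‖δ‖^2/2) with hL₀
    have hpoint : ∀ s : EuclideanSpace ℝ (Fin n),
        Set.indicator {s : EuclideanSpace ℝ (Fin n) | ⟪s, u⟫ ≤ a}
          (fun s => gaussDensity n (s - δ)) s + L₀ * (gaussDensity n s * f s)
        ≤ gaussDensity n (s - δ) * f s + L₀ * Set.indicator
            {s : EuclideanSpace ℝ (Fin n) | ⟪s, u⟫ ≤ a} (gaussDensity n) s := by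
      intro s
      have hρpos := gaussDensity_pos (n := n) s
      have hρs := hρshift s
      by_cases hs : s ∈ {s : EuclideanSpace ℝ (Fin n) | ⟪s, u⟫ ≤ a}
      · rw [Set.indicator_of_mem hs, Set.indicator_of_mem hs]
        have hL : Real.exp (‖δ‖ * ⟪s, u⟫ - ‖δ‖^2/2) ≤ L₀ := by
          rw [hL₀]
          apply Real.exp_le_exp.2
          have : ‖δ‖ * ⟪s, u⟫ ≤ ‖δ‖ * a :=
            mul_le_mul_of_nonneg_left hs (norm_nonneg δ)
          linarith
        have h2 : gaussDensity n (s - δ) ≤ L₀ * gaussDensity n s := by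
          rw [hρs, mul_comm L₀ (gaussDensity n s)]
          exact mul_le_mul_of_nonneg_left hL hρpos.le
        nlinarith [mul_nonneg (sub_nonneg.2 (h1 s))
          (sub_nonneg.2 h2)]
      · rw [Set.indicator_of_notMem hs, Set.indicator_of_notMem hs]
        have hL : L₀ ≤ Real.exp (‖δ‖ * ⟪s, u⟫ - ‖δ‖^2/2) := by
          rw [hL₀]
          apply Real.exp_le_exp.2
          have hsa : a ≤ ⟪s, u⟫ := le_of_not_ge hs
          have : ‖δ‖ * a ≤ ‖δ‖ * ⟪s, u⟫ :=
            mul_le_mul_of_nonneg_left hsa (norm_nonneg δ)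
          linarith
        have h2 : L₀ * gaussDensity n s ≤ gaussDensity n (s - δ) := by
          rw [hρs, mul_comm L₀ (gaussDensity n s)]
          exact mul_le_mul_of_nonneg_left hL hρpos.le
        have h3 := mul_le_mul_of_nonneg_right h2 (h0 s)
        linarith
    -- integrate
    have hmono : (∫ s, Set.indicator {s : EuclideanSpace ℝ (Fin n) | ⟪s, u⟫ ≤ a}
          (fun s => gaussDensity n (s - δ)) s) + L₀ * ∫ s, gaussDensity n s * f s
        ≤ (∫ s, gaussDensity n (s - δ) * f s) + L₀ * ∫ s, Set.indicator
          {s : EuclideanSpace ℝ (Fin n) | ⟪s, u⟫ ≤ a} (gaussDensity n) s := by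
      rw [← MeasureTheory.integral_const_mul, ← MeasureTheory.integral_const_mul,
        ← MeasureTheory.integral_add int2 (int3.const_mul L₀),
        ← MeasureTheory.integral_add int1 (int4.const_mul L₀)]
      exact MeasureTheory.integral_mono (int2.add (int3.const_mul L₀))
        (int1.add (int4.const_mul L₀)) hpoint
    rw [I2, I3, I3'] at hmono
    rw [I1]
    linarith

lemma integrable_gauss_mul {n : ℕ} (g : EuclideanSpace ℝ (Fin n) → ℝ) (hg : Measurable g)
    (h0 : ∀ t, 0 ≤ g t) (h1 : ∀ t, g t ≤ 1) :
    Integrable (fun s => gaussDensity n s * g s) := by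
  apply (integrable_gaussDensity n).mono'
  · exact ((continuous_gaussDensity n).measurable.mul hg).aestronglyMeasurable
  · refine Filter.Eventually.of_forall fun s => ?_
    rw [Real.norm_eq_abs, abs_of_nonneg (mul_nonneg (gaussDensity_pos s).le (h0 s))]
    exact mul_le_of_le_one_right (gaussDensity_pos s).le (h1 s)

lemma gauss_integral_one_sub {n : ℕ} (g : EuclideanSpace ℝ (Fin n) → ℝ) (hg : Measurable g)
    (h0 : ∀ t, 0 ≤ g t) (h1 : ∀ t, g t ≤ 1) :
    (∫ t, (1 - g t) ∂(stdGaussian n)) = 1 - ∫ t, g t ∂(stdGaussian n) := by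
  rw [stdGaussian_integral, stdGaussian_integral]
  simp_rw [mul_sub, mul_one]
  rw [MeasureTheory.integral_sub (integrable_gaussDensity n)
    (integrable_gauss_mul g hg h0 h1), integral_gaussDensity]

lemma np_upper {n : ℕ} (f : EuclideanSpace ℝ (Fin n) → ℝ) (hf : Measurable f)
    (h0 : ∀ t, 0 ≤ f t) (h1 : ∀ t, f t ≤ 1) (δ : EuclideanSpace ℝ (Fin n)) (a : ℝ)
    (ha : (∫ t, f t ∂(stdGaussian n)) = stdGaussianCDF a) :
    (∫ t, f (δ + t) ∂(stdGaussian n)) ≤ stdGaussianCDF (a + ‖δ‖) := by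
  have ha' : (∫ t, (1 - f t) ∂(stdGaussian n)) = stdGaussianCDF (-a) := by
    rw [gauss_integral_one_sub f hf h0 h1, ha, stdGaussianCDF_neg]
  have key := np_lower (fun t => 1 - f t) (measurable_const.sub hf)
    (fun t => by linarith [h1 t]) (fun t => by linarith [h0 t]) δ (-a) ha'
  have hconv : (∫ t, (1 - f (δ + t)) ∂(stdGaussian n)) = 1 - ∫ t, f (δ + t) ∂(stdGaussian n) :=
    gauss_integral_one_sub (fun t => f (δ + t)) (hf.comp (measurable_const_add δ))
      (fun t => h0 _) (fun t => h1 _)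
  have hneg : stdGaussianCDF (-a - ‖δ‖) = 1 - stdGaussianCDF (a + ‖δ‖) := by
    rw [show -a - ‖δ‖ = -(a + ‖δ‖) by ring, stdGaussianCDF_neg]
  rw [hconv, hneg] at key
  linarith

/-- if the Weierstrass transforms `f̂_A, f̂_B` of measurable functions
`f_A, f_B : ℝⁿ → [0,1]` take values in `(0,1)`, `p_A = f̂_A(x)`, `p_B = f̂_B(x)` with
`p_B ≤ p_A`, then any perturbation `δ` with `f̂_A(x+δ) ≤ f̂_B(x+δ)` satisfies
`‖δ‖₂ ≥ (1/2)(Φ⁻¹(p_A) - Φ⁻¹(p_B))`. -/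
theorem smoothing_robustness_radius (n : ℕ)
    (fA fB : EuclideanSpace ℝ (Fin n) → ℝ)
    (hfA : Measurable fA) (hfB : Measurable fB)
    (hfA01 : ∀ t, fA t ∈ Set.Icc (0 : ℝ) 1) (hfB01 : ∀ t, fB t ∈ Set.Icc (0 : ℝ) 1)
    (fhatA fhatB : EuclideanSpace ℝ (Fin n) → ℝ)
    (hfhatA : ∀ x, fhatA x = ∫ t, fA (x + t) ∂(stdGaussian n))
    (hfhatB : ∀ x, fhatB x = ∫ t, fB (x + t) ∂(stdGaussian n))
    (hA01 : ∀ x, fhatA x ∈ Set.Ioo (0 : ℝ) 1)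
    (hB01 : ∀ x, fhatB x ∈ Set.Ioo (0 : ℝ) 1)
    (x : EuclideanSpace ℝ (Fin n)) (pA pB : ℝ)
    (hpA : pA = fhatA x) (hpB : pB = fhatB x) (hle : pB ≤ pA)
    (δ : EuclideanSpace ℝ (Fin n)) (hflip : fhatA (x + δ) ≤ fhatB (x + δ)) :
    ‖δ‖ ≥ (1 / 2) * (stdGaussianCDFInv pA - stdGaussianCDFInv pB) := by
  have hpAIoo : pA ∈ Set.Ioo (0:ℝ) 1 := hpA ▸ hA01 x
  have hpBIoo : pB ∈ Set.Ioo (0:ℝ) 1 := hpB ▸ hB01 x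
  set A := stdGaussianCDFInv pA with hA
  set B := stdGaussianCDFInv pB with hB
  have hΦA : stdGaussianCDF A = pA := stdGaussianCDF_invFun hpAIoo
  have hΦB : stdGaussianCDF B = pB := stdGaussianCDF_invFun hpBIoo
  -- lower bound for fA
  have haA : (∫ t, fA (x + t) ∂(stdGaussian n)) = stdGaussianCDF A := by
    rw [← hfhatA x, ← hpA, hΦA]
  have hlow := np_lower (fun t => fA (x + t)) (hfA.comp (measurable_const_add x))
    (fun t => (hfA01 _).1) (fun t => (hfA01 _).2) δ A haA
  have hlowconv : (∫ t, fA (x + (δ + t)) ∂(stdGaussian n)) = fhatA (x + δ) := by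
    rw [hfhatA (x + δ)]
    congr 1
    funext t
    rw [add_assoc]
  rw [hlowconv] at hlow
  -- upper bound for fB
  have haB : (∫ t, fB (x + t) ∂(stdGaussian n)) = stdGaussianCDF B := by
    rw [← hfhatB x, ← hpB, hΦB]
  have hup := np_upper (fun t => fB (x + t)) (hfB.comp (measurable_const_add x))
    (fun t => (hfB01 _).1) (fun t => (hfB01 _).2) δ B haB
  have hupconv : (∫ t, fB (x + (δ + t)) ∂(stdGaussian n)) = fhatB (x + δ) := by
    rw [hfhatB (x + δ)]
    congr 1
    funext t
    rw [add_assoc]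
  rw [hupconv] at hup
  -- chain
  have hchain : stdGaussianCDF (A - ‖δ‖) ≤ stdGaussianCDF (B + ‖δ‖) := by
    calc stdGaussianCDF (A - ‖δ‖) ≤ fhatA (x + δ) := hlow
      _ ≤ fhatB (x + δ) := hflip
      _ ≤ stdGaussianCDF (B + ‖δ‖) := hup
  have hAB : A - ‖δ‖ ≤ B + ‖δ‖ := stdGaussianCDF_strictMono.le_iff_le.1 hchain
  linarith
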